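/- Let $A$ be an integer matrix, $\mathbf{u}, \mathbf{v} \in \mathbb{N}^N$ with $A\mathbf{u} = A\mathbf{v}$, disjoint supports, $u_1 = \alpha \geq 2$ and $v_1 = 0$. Then for every integer $1 \leq \beta \leq \alpha - 1$, the vector $(\mathbf{u} - (\alpha-\beta)\mathbf{e}_1) - \frac{\beta}{\alpha}(\mathbf{u} - \mathbf{v})$ is a nonnegative real vector satisfying $A\mathbf{x} = A(\mathbf{u} - (\alpha-\beta)\mathbf{e}_1)$ and has first coordinate $0$. -/

import Mathlib

/-- For every `1 ≤ β ≤ α - 1`, the vector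
`(u - (α-β)e₁) - (β/α)(u - v)` is a nonnegative real solution of
`Ax = A(u - (α-β)e₁)` with first coordinate `0`. -/
theorem lp_solution_for_each_beta {m N : ℕ}
    (A : Matrix (Fin m) (Fin (N+1)) ℤ)
    (u v : Fin (N+1) → ℕ) (α β : ℕ) (hα : 2 ≤ α)
    (hβ1 : 1 ≤ β) (hβ2 : β ≤ α - 1)
    (hu : u 0 = α) (hv : v 0 = 0)
    (hdisj : ∀ i, u i = 0 ∨ v i = 0)
    (heq : A.mulVec (fun i => (u i : ℤ)) = A.mulVec (fun i => (v i : ℤ))) :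
    (∀ i, (0:ℚ) ≤ ((u i : ℚ) - (if i = 0 then (α : ℚ) - (β : ℚ) else 0))
        - ((β : ℚ)/(α : ℚ)) * ((u i : ℚ) - (v i : ℚ))) ∧
    ((A.map (Int.cast : ℤ → ℚ)).mulVec
        (fun i => ((u i : ℚ) - (if i = 0 then (α : ℚ) - (β : ℚ) else 0))
          - ((β : ℚ)/(α : ℚ)) * ((u i : ℚ) - (v i : ℚ)))
      = (A.map (Int.cast : ℤ → ℚ)).mulVec
        (fun i => (u i : ℚ) - (if i = 0 then (α : ℚ) - (β : ℚ) else 0))) ∧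
    (((u 0 : ℚ) - ((α : ℚ) - (β : ℚ))) - ((β : ℚ)/(α : ℚ)) * ((u 0 : ℚ) - (v 0 : ℚ)) = 0) := by
  have hα0 : (α:ℚ) ≠ 0 := by positivity
  have hβα : (β:ℚ) ≤ (α:ℚ) := by
    exact_mod_cast le_trans hβ2 (Nat.sub_le α 1)
  have hfrac0 : (0:ℚ) ≤ (β:ℚ)/(α:ℚ) := by positivity
  have hfrac1 : (β:ℚ)/(α:ℚ) ≤ 1 := by
    rw [div_le_one (by positivity)]; exact hβα
  refine ⟨?_, ?_, ?_⟩
  · intro i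
    by_cases hi : i = 0
    · subst hi
      rw [if_pos rfl, hu, hv]
      field_simp
      push_cast; nlinarith
    · rw [if_neg hi]
      rcases hdisj i with h | h
      · rw [h]; push_cast; nlinarith [Nat.cast_nonneg (α := ℚ) (v i)]
      · rw [h]; push_cast
        nlinarith [Nat.cast_nonneg (α := ℚ) (u i)]
  · ext j
    have hrow : ∑ i, ((A j i : ℚ)) * ((u i : ℚ) - (v i : ℚ)) = 0 := by
      have := congrFun heq j
      simp only [Matrix.mulVec, dotProduct] at this
      have : ((∑ i, A j i * (u i : ℤ) : ℤ) : ℚ) = ((∑ i, A j i * (v i : ℤ) : ℤ) : ℚ) := by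
        exact_mod_cast this
      push_cast at this
      simp only [mul_sub, Finset.sum_sub_distrib]
      linarith
    simp only [Matrix.mulVec, dotProduct, Matrix.map_apply]
    rw [← sub_eq_zero, ← Finset.sum_sub_distrib]
    have : ∀ i ∈ Finset.univ, ((A j i : ℚ)) * (((u i : ℚ) - (if i = 0 then (α : ℚ) - (β : ℚ) else 0))
          - ((β : ℚ)/(α : ℚ)) * ((u i : ℚ) - (v i : ℚ)))
        - ((A j i : ℚ)) * ((u i : ℚ) - (if i = 0 then (α : ℚ) - (β : ℚ) else 0))
        = -((β : ℚ)/(α : ℚ)) * (((A j i : ℚ)) * ((u i : ℚ) - (v i : ℚ))) := by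
      intro i _; ring
    rw [Finset.sum_congr rfl this, ← Finset.mul_sum, hrow, mul_zero]
  · rw [hu, hv]
    field_simp
    push_cast; ring
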